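/- Smoothness of the dual objective (Theorem 3.4): in the finite soft MOMDP setup, suppose |r_m(s,a)| ≤ R_m for all (s,a) and 1 ≤ m ≤ n, let μ0 : S → ℝ be an initial distribution (μ0 ≥ 0, Σ μ0 = 1), let b ∈ ℝ^n, and define L(θ) = Σ_s μ0(s)·V(θ)(s) − ⟨b, θ⟩, where V(θ) is the unique fixed point of T_θ. Then L is differentiable and its gradient is α-Lipschitz with respect to the Euclidean norm, i.e., ‖∇L(θ) − ∇L(θ')‖₂ ≤ α‖θ − θ'‖₂ for all θ, θ' ∈ ℝ^n, where α = (1/(β(1−γ))) Σ_{m=1}^n (R_m/(1−γ))². -/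

import Mathlib

open Finset Real

section lemmas
variable {A : Type*} [Fintype A] [Nonempty A]

lemma lse_le {β : ℝ} (hβ : 0 < β) (x y : A → ℝ) (c : ℝ)
    (h : ∀ a, x a ≤ y a + c) :
    β * Real.log (∑ a, Real.exp (x a / β)) ≤ β * Real.log (∑ a, Real.exp (y a / β)) + c := by
  have hpos : 0 < ∑ a, Real.exp (y a / β) :=
    Finset.sum_pos (fun a _ => Real.exp_pos _) Finset.univ_nonempty
  have h1 : ∑ a, Real.exp (x a / β) ≤ Real.exp (c / β) * ∑ a, Real.exp (y a / β) := by
    rw [Finset.mul_sum]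
    refine Finset.sum_le_sum fun a _ => ?_
    rw [← Real.exp_add, ← add_div]
    exact Real.exp_le_exp.2 ((div_le_div_iff_of_pos_right hβ).2 (by linarith [h a]))
  have h2 : Real.log (∑ a, Real.exp (x a / β)) ≤ c / β + Real.log (∑ a, Real.exp (y a / β)) := by
    calc Real.log (∑ a, Real.exp (x a / β)) ≤ Real.log (Real.exp (c / β) * ∑ a, Real.exp (y a / β)) :=
          Real.log_le_log (Finset.sum_pos (fun a _ => Real.exp_pos _) Finset.univ_nonempty) h1
      _ = c / β + Real.log (∑ a, Real.exp (y a / β)) := by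
          rw [Real.log_mul (Real.exp_ne_zero _) (ne_of_gt hpos), Real.log_exp]
  calc β * Real.log (∑ a, Real.exp (x a / β))
      ≤ β * (c / β + Real.log (∑ a, Real.exp (y a / β))) := by
        exact mul_le_mul_of_nonneg_left h2 hβ.le
    _ = β * Real.log (∑ a, Real.exp (y a / β)) + c := by field_simp; ring

lemma lse_abs_le {β : ℝ} (hβ : 0 < β) (x y : A → ℝ) (c : ℝ)
    (h : ∀ a, |x a - y a| ≤ c) :
    |β * Real.log (∑ a, Real.exp (x a / β)) - β * Real.log (∑ a, Real.exp (y a / β))| ≤ c := by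
  rw [abs_le]
  constructor
  · have := lse_le hβ y x c (fun a => by have := (abs_le.1 (h a)).1; linarith)
    linarith
  · have := lse_le hβ x y c (fun a => by have := (abs_le.1 (h a)).2; linarith)
    linarith

lemma mad_le (σ h : A → ℝ) (d : ℝ) (hσ0 : ∀ a, 0 ≤ σ a) (hσ1 : ∑ a, σ a = 1)
    (hh : ∀ a, |h a| ≤ d) :
    ∑ a, σ a * |h a - ∑ b, σ b * h b| ≤ d := by
  set e := ∑ b, σ b * h b with he
  obtain ⟨a0⟩ := (inferInstance : Nonempty A)
  have hd0 : 0 ≤ d := (abs_nonneg _).trans (hh a0)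
  set M := Finset.univ.sup' Finset.univ_nonempty h with hM
  set m := Finset.univ.inf' Finset.univ_nonempty h with hm
  have hhm : ∀ a, m ≤ h a := fun a => Finset.inf'_le _ (Finset.mem_univ a)
  have hhM : ∀ a, h a ≤ M := fun a => Finset.le_sup' _ (Finset.mem_univ a)
  have hMd : M ≤ d := Finset.sup'_le _ _ fun a _ => (abs_le.1 (hh a)).2
  have hmd : -d ≤ m := Finset.le_inf' _ _ fun a _ => (abs_le.1 (hh a)).1
  have hem : m ≤ e := by
    calc m = ∑ b, σ b * m := by rw [← Finset.sum_mul, hσ1, one_mul]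
      _ ≤ ∑ b, σ b * h b := Finset.sum_le_sum fun b _ => mul_le_mul_of_nonneg_left (hhm b) (hσ0 b)
  have heM : e ≤ M := by
    calc e ≤ ∑ b, σ b * M := Finset.sum_le_sum fun b _ => mul_le_mul_of_nonneg_left (hhM b) (hσ0 b)
      _ = M := by rw [← Finset.sum_mul, hσ1, one_mul]
  rcases le_or_gt M m with hMm | hmM
  · -- all values equal
    have hconst : ∀ a, h a - e = 0 := by
      intro a
      have h1 := hhm a; have h2 := hhM a
      linarith
    have : ∑ a, σ a * |h a - e| = 0 :=
      Finset.sum_eq_zero fun a _ => by rw [hconst a]; simp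
    linarith
  · have habs : ∀ z : ℝ, |z| = 2 * max z 0 - z := by
      intro z
      rcases le_or_gt 0 z with hz | hz
      · rw [abs_of_nonneg hz, max_eq_left hz]; ring
      · rw [abs_of_neg hz, max_eq_right hz.le]; ring
    have hsum0 : ∑ a, σ a * (h a - e) = 0 := by
      simp only [mul_sub, Finset.sum_sub_distrib, ← Finset.sum_mul, hσ1, one_mul]
      rw [← he, sub_self]
    have key : ∀ a, max (h a - e) 0 ≤ (h a - m) * (M - e) / (M - m) := by
      intro a
      have h1 := hhm a; have h2 := hhM a
      rcases le_or_gt (h a) e with hle | hlt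
      · rw [max_eq_right (by linarith)]
        exact div_nonneg (mul_nonneg (by linarith) (by linarith)) (by linarith)
      · rw [max_eq_left (by linarith)]
        rw [le_div_iff₀ (by linarith)]
        nlinarith
    calc ∑ a, σ a * |h a - e| = ∑ a, (2 * (σ a * max (h a - e) 0) - σ a * (h a - e)) := by
          refine Finset.sum_congr rfl fun a _ => ?_
          rw [habs]; ring
      _ = 2 * ∑ a, σ a * max (h a - e) 0 - ∑ a, σ a * (h a - e) := by
          rw [Finset.sum_sub_distrib, Finset.mul_sum]
      _ = 2 * ∑ a, σ a * max (h a - e) 0 := by rw [hsum0]; ring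
      _ ≤ 2 * ∑ a, σ a * ((h a - m) * (M - e) / (M - m)) := by
          apply mul_le_mul_of_nonneg_left _ (by norm_num)
          exact Finset.sum_le_sum fun a _ => mul_le_mul_of_nonneg_left (key a) (hσ0 a)
      _ = 2 * ((e - m) * (M - e) / (M - m)) := by
          have h1 : ∀ a : A, σ a * ((h a - m) * (M - e) / (M - m))
              = (σ a * (h a - m)) * ((M - e) / (M - m)) := fun a => by ring
          rw [Finset.sum_congr rfl fun a _ => h1 a, ← Finset.sum_mul]
          have h2 : ∑ a, σ a * (h a - m) = e - m := by
            simp only [mul_sub, Finset.sum_sub_distrib, ← Finset.sum_mul, hσ1, one_mul]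
            try rw [← he]
          rw [h2]; ring
      _ ≤ d := by
          rw [show 2 * ((e - m) * (M - e) / (M - m)) = (2 * ((e - m) * (M - e))) / (M - m) from by
            ring]
          rw [div_le_iff₀ (by linarith)]
          nlinarith [sq_nonneg (M + m - 2 * e)]


lemma softmax_comb_lip {F : Type*} [NormedAddCommGroup F] [NormedSpace ℝ F]
    (w : A → F) (ρ : ℝ) (hρ : 0 ≤ ρ) (hw : ∀ a, ‖w a‖ ≤ ρ) (x y : A → ℝ) (d : ℝ)
    (hd : ∀ a, |x a - y a| ≤ d) :
    ‖(∑ a, (Real.exp (x a) / ∑ b, Real.exp (x b)) • w a)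
      - ∑ a, (Real.exp (y a) / ∑ b, Real.exp (y b)) • w a‖ ≤ ρ * d := by
  have hd0 : 0 ≤ d := (abs_nonneg _).trans (hd (Classical.arbitrary A))
  set h : A → ℝ := fun a => y a - x a with hh
  set z : ℝ → A → ℝ := fun t a => x a + t * h a with hz
  set S : ℝ → ℝ := fun t => ∑ b, Real.exp (z t b) with hS
  have hSpos : ∀ t, 0 < S t := fun t =>
    Finset.sum_pos (fun b _ => Real.exp_pos _) Finset.univ_nonempty
  set φ : ℝ → F := fun t => ∑ a, (Real.exp (z t a) / S t) • w a with hφdef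
  set D : ℝ → F := fun t =>
    ∑ a, ((Real.exp (z t a) / S t) * (h a - ∑ b, (Real.exp (z t b) / S t) * h b)) • w a with hD
  have hza : ∀ t a, HasDerivAt (fun t => z t a) (h a) t := by
    intro t a
    have := ((hasDerivAt_id t).mul_const (h a)).const_add (x a)
    rw [one_mul] at this
    exact this
  have hexp : ∀ t a, HasDerivAt (fun t => Real.exp (z t a)) (Real.exp (z t a) * h a) t :=
    fun t a => (hza t a).exp
  have hS' : ∀ t, HasDerivAt S (∑ b, Real.exp (z t b) * h b) t :=
    fun t => HasDerivAt.fun_sum fun b _ => hexp t b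
  have hφ : ∀ t, HasDerivAt φ (D t) t := by
    intro t
    have h1 : HasDerivAt φ (∑ a, ((Real.exp (z t a) * h a * S t
        - Real.exp (z t a) * ∑ b, Real.exp (z t b) * h b) / (S t) ^ 2) • w a) t :=
      HasDerivAt.fun_sum fun a _ => (((hexp t a).div (hS' t) (hSpos t).ne').smul_const (w a))
    convert h1 using 1
    refine Finset.sum_congr rfl fun a _ => ?_
    congr 1
    have h2 : ∀ b : A, Real.exp (z t b) / S t * h b = Real.exp (z t b) * h b / S t :=
      fun b => by ring
    rw [Finset.sum_congr rfl fun b _ => h2 b, ← Finset.sum_div]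
    have hS0 : S t ≠ 0 := (hSpos t).ne'
    field_simp
  have hbound : ∀ t, ‖D t‖ ≤ ρ * d := by
    intro t
    set σ : A → ℝ := fun a => Real.exp (z t a) / S t with hσ
    have hσ0 : ∀ a, 0 ≤ σ a := fun a => div_nonneg (Real.exp_pos _).le (hSpos t).le
    have hσ1 : ∑ a, σ a = 1 := by
      rw [hσ]; rw [← Finset.sum_div]; exact div_self (hSpos t).ne'
    calc ‖D t‖ ≤ ∑ a, ‖(σ a * (h a - ∑ b, σ b * h b)) • w a‖ := norm_sum_le _ _
      _ = ∑ a, (σ a * |h a - ∑ b, σ b * h b|) * ‖w a‖ := by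
          refine Finset.sum_congr rfl fun a _ => ?_
          rw [norm_smul, Real.norm_eq_abs, abs_mul, abs_of_nonneg (hσ0 a)]
      _ ≤ ∑ a, (σ a * |h a - ∑ b, σ b * h b|) * ρ := by
          refine Finset.sum_le_sum fun a _ => ?_
          exact mul_le_mul_of_nonneg_left (hw a) (mul_nonneg (hσ0 a) (abs_nonneg _))
      _ = (∑ a, σ a * |h a - ∑ b, σ b * h b|) * ρ := by rw [← Finset.sum_mul]
      _ ≤ d * ρ := by
          refine mul_le_mul_of_nonneg_right ?_ hρ
          exact mad_le σ h d hσ0 hσ1 fun a => by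
            rw [hh]; simpa [abs_sub_comm] using hd a
      _ = ρ * d := mul_comm _ _
  have key : ‖φ 1 - φ 0‖ ≤ ρ * d := by
    refine norm_image_sub_le_of_norm_deriv_le_segment_01' (f' := D)
      (fun t _ => (hφ t).hasDerivWithinAt) (fun t _ => hbound t)
  have hφ0 : φ 0 = ∑ a, (Real.exp (x a) / ∑ b, Real.exp (x b)) • w a := by
    simp [hφdef, hS, hz]
  have hφ1 : φ 1 = ∑ a, (Real.exp (y a) / ∑ b, Real.exp (y b)) • w a := by
    simp [hφdef, hS, hz, hh]
  rw [← hφ0, ← hφ1, norm_sub_rev]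
  exact key

end lemmas

lemma opnorm_le_coord {n : ℕ} (ℓ : EuclideanSpace ℝ (Fin n) →L[ℝ] ℝ) (w : Fin n → ℝ)
    (h : ∀ m, |ℓ (EuclideanSpace.single m 1)| ≤ w m) :
    ‖ℓ‖ ≤ Real.sqrt (∑ m, w m ^ 2) := by
  have hw0 : ∀ m, 0 ≤ w m := fun m => (abs_nonneg _).trans (h m)
  refine ContinuousLinearMap.opNorm_le_bound ℓ (Real.sqrt_nonneg _) fun θ => ?_
  have hdecomp : θ = ∑ m, θ m • EuclideanSpace.single m (1:ℝ) := by
    ext j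
    have : (∑ m, θ m • EuclideanSpace.single m (1:ℝ)) j
        = ∑ m, (θ m • EuclideanSpace.single m (1:ℝ)) j := by
      rw [WithLp.ofLp_sum, Finset.sum_apply]
    rw [this]
    simp [EuclideanSpace.single_apply]
  have h1 : ℓ θ = ∑ m, θ m * ℓ (EuclideanSpace.single m 1) := by
    conv_lhs => rw [hdecomp]
    rw [map_sum]
    simp
  have h2 : |ℓ θ| ≤ ∑ m, |θ m| * w m := by
    rw [h1]
    refine (Finset.abs_sum_le_sum_abs _ _).trans ?_
    refine Finset.sum_le_sum fun m _ => ?_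
    rw [abs_mul]
    exact mul_le_mul_of_nonneg_left (h m) (abs_nonneg _)
  have hCS : (∑ m, |θ m| * w m) ^ 2 ≤ (∑ m, |θ m| ^ 2) * ∑ m, w m ^ 2 :=
    Finset.sum_mul_sq_le_sq_mul_sq Finset.univ _ _
  have hnorm : ‖θ‖ = Real.sqrt (∑ m, θ m ^ 2) := by
    rw [EuclideanSpace.norm_eq]
    congr 1
    exact Finset.sum_congr rfl fun m _ => by
      rw [Real.norm_eq_abs, sq_abs]
  have h3 : ∑ m, |θ m| * w m ≤ ‖θ‖ * Real.sqrt (∑ m, w m ^ 2) := by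
    rw [hnorm, ← Real.sqrt_mul (Finset.sum_nonneg fun m _ => sq_nonneg _)]
    rw [Real.le_sqrt (Finset.sum_nonneg fun m _ => mul_nonneg (abs_nonneg _) (hw0 m))
      (mul_nonneg (Finset.sum_nonneg fun m _ => sq_nonneg _)
        (Finset.sum_nonneg fun m _ => sq_nonneg _))]
    calc (∑ m, |θ m| * w m) ^ 2 ≤ (∑ m, |θ m| ^ 2) * ∑ m, w m ^ 2 := hCS
      _ = (∑ m, θ m ^ 2) * ∑ m, w m ^ 2 := by
          congr 1
          exact Finset.sum_congr rfl fun m _ => by rw [sq_abs]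
  calc ‖ℓ θ‖ = |ℓ θ| := rfl
    _ ≤ ∑ m, |θ m| * w m := h2
    _ ≤ ‖θ‖ * Real.sqrt (∑ m, w m ^ 2) := h3
    _ = Real.sqrt (∑ m, w m ^ 2) * ‖θ‖ := mul_comm _ _

lemma quad_bound {E F : Type*} [NormedAddCommGroup E] [NormedSpace ℝ E]
    [NormedAddCommGroup F] [NormedSpace ℝ F]
    (f : E → F) (D : E → (E →L[ℝ] F)) (α : ℝ) (hα : 0 ≤ α)
    (hf : ∀ θ, HasFDerivAt f (D θ) θ) (hL : ∀ θ θ', ‖D θ - D θ'‖ ≤ α * ‖θ - θ'‖) (x y : E) :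
    ‖f y - f x - D x (y - x)‖ ≤ α * ‖y - x‖ ^ 2 := by
  set g : E → F := fun θ => f θ - D x θ with hg
  have hg' : ∀ θ, HasFDerivAt g (D θ - D x) θ := fun θ => (hf θ).sub ((D x).hasFDerivAt)
  have hbound : ∀ θ ∈ segment ℝ x y, ‖D θ - D x‖ ≤ α * ‖y - x‖ := by
    intro θ hθ
    rw [segment_eq_image'] at hθ
    obtain ⟨t, ht, rfl⟩ := hθ
    calc ‖D (x + t • (y - x)) - D x‖ ≤ α * ‖x + t • (y - x) - x‖ := hL _ _
      _ = α * (t * ‖y - x‖) := by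
          rw [add_sub_cancel_left, norm_smul, Real.norm_eq_abs, abs_of_nonneg ht.1]
      _ ≤ α * (1 * ‖y - x‖) := by
          refine mul_le_mul_of_nonneg_left ?_ hα
          exact mul_le_mul_of_nonneg_right ht.2 (norm_nonneg _)
      _ = α * ‖y - x‖ := by ring_nf
  have key := (convex_segment x y).norm_image_sub_le_of_norm_hasFDerivWithin_le
    (fun θ hθ => (hg' θ).hasFDerivWithinAt) hbound
    (left_mem_segment ℝ x y) (right_mem_segment ℝ x y)
  have hgy : g y - g x = f y - f x - D x (y - x) := by
    rw [hg]; simp [map_sub]; abel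
  rw [hgy] at key
  calc ‖f y - f x - D x (y - x)‖ ≤ α * ‖y - x‖ * ‖y - x‖ := key
    _ = α * ‖y - x‖ ^ 2 := by ring

section mdp

set_option linter.unusedSectionVars false

variable {p n : ℕ} {A : Type*} [Fintype A] [Nonempty A]

noncomputable def vIt (T : Fin p → A → Fin p → ℝ) (γ β : ℝ) (r : Fin p → A → Fin n → ℝ) :
    ℕ → EuclideanSpace ℝ (Fin n) → Fin p → ℝ
  | 0 => fun _ _ => 0
  | (k+1) => fun θ s => β * Real.log (∑ a : A, Real.exp
      ((∑ i, θ i * r s a i + γ * ∑ s', T s a s' * vIt T γ β r k θ s') / β))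

noncomputable def gIt (T : Fin p → A → Fin p → ℝ) (γ β : ℝ) (r : Fin p → A → Fin n → ℝ)
    (k : ℕ) (θ : EuclideanSpace ℝ (Fin n)) (s : Fin p) (a : A) : ℝ :=
  ∑ i, θ i * r s a i + γ * ∑ s', T s a s' * vIt T γ β r k θ s'

lemma vIt_succ (T : Fin p → A → Fin p → ℝ) (γ β : ℝ) (r : Fin p → A → Fin n → ℝ)
    (k : ℕ) (θ : EuclideanSpace ℝ (Fin n)) (s : Fin p) :
    vIt T γ β r (k+1) θ s = β * Real.log (∑ a : A, Real.exp (gIt T γ β r k θ s a / β)) := rfl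

noncomputable def rv (r : Fin p → A → Fin n → ℝ) (s : Fin p) (a : A) :
    EuclideanSpace ℝ (Fin n) := WithLp.toLp 2 (fun m => r s a m)

noncomputable def DIt (T : Fin p → A → Fin p → ℝ) (γ β : ℝ) (r : Fin p → A → Fin n → ℝ) :
    ℕ → EuclideanSpace ℝ (Fin n) → Fin p → (EuclideanSpace ℝ (Fin n) →L[ℝ] ℝ)
  | 0 => fun _ _ => 0
  | (k+1) => fun θ s => ∑ a : A,
      (Real.exp (gIt T γ β r k θ s a / β) / ∑ b : A, Real.exp (gIt T γ β r k θ s b / β)) •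
      (innerSL ℝ (rv r s a) + γ • ∑ s', T s a s' • DIt T γ β r k θ s')

noncomputable def GIt (T : Fin p → A → Fin p → ℝ) (γ β : ℝ) (r : Fin p → A → Fin n → ℝ)
    (k : ℕ) (θ : EuclideanSpace ℝ (Fin n)) (s : Fin p) (a : A) :
    EuclideanSpace ℝ (Fin n) →L[ℝ] ℝ :=
  innerSL ℝ (rv r s a) + γ • ∑ s', T s a s' • DIt T γ β r k θ s'

lemma DIt_succ (T : Fin p → A → Fin p → ℝ) (γ β : ℝ) (r : Fin p → A → Fin n → ℝ)
    (k : ℕ) (θ : EuclideanSpace ℝ (Fin n)) (s : Fin p) :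
    DIt T γ β r (k+1) θ s = ∑ a : A,
      (Real.exp (gIt T γ β r k θ s a / β) / ∑ b : A, Real.exp (gIt T γ β r k θ s b / β)) •
      GIt T γ β r k θ s a := rfl

lemma innerSL_rv_apply (r : Fin p → A → Fin n → ℝ) (s : Fin p) (a : A)
    (u : EuclideanSpace ℝ (Fin n)) :
    innerSL ℝ (rv r s a) u = ∑ i, u i * r s a i := by
  simp [rv, PiLp.inner_apply, RCLike.inner_apply, mul_comm]

lemma hasFDerivAt_sum_mul (c : EuclideanSpace ℝ (Fin n)) (θ : EuclideanSpace ℝ (Fin n)) :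
    HasFDerivAt (fun θ : EuclideanSpace ℝ (Fin n) => ∑ i, θ i * c i) (innerSL ℝ c) θ := by
  have h := (innerSL ℝ c).hasFDerivAt (x := θ)
  have heq : (fun θ : EuclideanSpace ℝ (Fin n) => ∑ i, θ i * c i)
      = fun θ => innerSL ℝ c θ := by
    funext u
    simp [PiLp.inner_apply, RCLike.inner_apply, mul_comm]
  rw [heq]
  exact h

lemma vIt_hasFDerivAt (T : Fin p → A → Fin p → ℝ) (γ β : ℝ) (hβ : 0 < β)
    (r : Fin p → A → Fin n → ℝ) :
    ∀ (k : ℕ) (θ : EuclideanSpace ℝ (Fin n)) (s : Fin p),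
      HasFDerivAt (fun θ => vIt T γ β r k θ s) (DIt T γ β r k θ s) θ := by
  intro k
  induction k with
  | zero =>
    intro θ s
    show HasFDerivAt (fun _ => (0:ℝ)) 0 θ
    exact hasFDerivAt_const 0 θ
  | succ k ih =>
    intro θ s
    have hg : ∀ a, HasFDerivAt (fun θ => gIt T γ β r k θ s a) (GIt T γ β r k θ s a) θ := by
      intro a
      unfold gIt GIt
      exact (hasFDerivAt_sum_mul (rv r s a) θ).add
        ((HasFDerivAt.fun_sum (fun s' _ => (ih θ s').const_mul (T s a s'))).const_mul γ)
    have hpos : (0:ℝ) < ∑ b : A, Real.exp (gIt T γ β r k θ s b / β) :=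
      Finset.sum_pos (fun b _ => Real.exp_pos _) Finset.univ_nonempty
    have hsum : HasFDerivAt (fun θ => ∑ a : A, Real.exp (gIt T γ β r k θ s a / β))
        (∑ a : A, Real.exp (gIt T γ β r k θ s a / β) • ((β:ℝ)⁻¹ • GIt T γ β r k θ s a)) θ := by
      refine HasFDerivAt.fun_sum fun a _ => ?_
      have h1 : HasFDerivAt (fun θ => gIt T γ β r k θ s a / β)
          ((β:ℝ)⁻¹ • GIt T γ β r k θ s a) θ := by
        simpa [div_eq_inv_mul] using (hg a).const_mul (β:ℝ)⁻¹
      exact h1.exp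
    have hlog : HasFDerivAt (fun θ => β * Real.log (∑ a : A, Real.exp (gIt T γ β r k θ s a / β)))
        (β • ((∑ a : A, Real.exp (gIt T γ β r k θ s a / β))⁻¹ •
          ∑ a : A, Real.exp (gIt T γ β r k θ s a / β) • ((β:ℝ)⁻¹ • GIt T γ β r k θ s a))) θ := by
      have := (hsum.log hpos.ne').const_mul β
      simpa [smul_smul] using this
    have heq : (β • ((∑ a : A, Real.exp (gIt T γ β r k θ s a / β))⁻¹ •
          ∑ a : A, Real.exp (gIt T γ β r k θ s a / β) • ((β:ℝ)⁻¹ • GIt T γ β r k θ s a)))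
        = DIt T γ β r (k+1) θ s := by
      rw [DIt_succ]
      ext u
      simp only [ContinuousLinearMap.coe_smul', Pi.smul_apply, ContinuousLinearMap.coe_sum',
        Finset.sum_apply, ContinuousLinearMap.smul_apply, smul_eq_mul]
      rw [Finset.mul_sum, Finset.mul_sum]
      refine Finset.sum_congr rfl fun a _ => ?_
      field_simp
    have hgoal : (fun θ => vIt T γ β r (k+1) θ s)
        = fun θ => β * Real.log (∑ a : A, Real.exp (gIt T γ β r k θ s a / β)) := rfl
    rw [hgoal, ← heq]
    exact hlog

lemma GIt_apply (T : Fin p → A → Fin p → ℝ) (γ β : ℝ) (r : Fin p → A → Fin n → ℝ)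
    (k : ℕ) (θ : EuclideanSpace ℝ (Fin n)) (s : Fin p) (a : A)
    (u : EuclideanSpace ℝ (Fin n)) :
    GIt T γ β r k θ s a u
      = innerSL ℝ (rv r s a) u + γ * ∑ s', T s a s' * DIt T γ β r k θ s' u := by
  simp [GIt, ContinuousLinearMap.sum_apply, Finset.mul_sum]

lemma innerSL_rv_single (r : Fin p → A → Fin n → ℝ) (s : Fin p) (a : A) (m : Fin n) :
    innerSL ℝ (rv r s a) (EuclideanSpace.single m 1) = r s a m := by
  rw [innerSL_rv_apply]
  simp [EuclideanSpace.single_apply]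

lemma softmax_nonneg (T : Fin p → A → Fin p → ℝ) (γ β : ℝ) (r : Fin p → A → Fin n → ℝ)
    (k : ℕ) (θ : EuclideanSpace ℝ (Fin n)) (s : Fin p) (a : A) :
    0 ≤ Real.exp (gIt T γ β r k θ s a / β) / ∑ b : A, Real.exp (gIt T γ β r k θ s b / β) :=
  div_nonneg (Real.exp_pos _).le
    (Finset.sum_pos (fun b _ => Real.exp_pos _) Finset.univ_nonempty).le

lemma softmax_sum_one (T : Fin p → A → Fin p → ℝ) (γ β : ℝ) (r : Fin p → A → Fin n → ℝ)
    (k : ℕ) (θ : EuclideanSpace ℝ (Fin n)) (s : Fin p) :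
    ∑ a : A, Real.exp (gIt T γ β r k θ s a / β) / ∑ b : A, Real.exp (gIt T γ β r k θ s b / β)
      = 1 := by
  rw [← Finset.sum_div]
  exact div_self (Finset.sum_pos (fun b _ => Real.exp_pos _) Finset.univ_nonempty).ne'

lemma GIt_coord (T : Fin p → A → Fin p → ℝ) (γ β : ℝ) (r : Fin p → A → Fin n → ℝ)
    (R : Fin n → ℝ) (hT0 : ∀ s a s', 0 ≤ T s a s') (hT1 : ∀ s a, ∑ s', T s a s' = 1)
    (hγ0 : 0 ≤ γ) (hγ1 : γ < 1) (hr : ∀ s a m, |r s a m| ≤ R m)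
    (k : ℕ) (θ : EuclideanSpace ℝ (Fin n)) (s : Fin p) (a : A) (m : Fin n)
    (hD : ∀ s' m, |DIt T γ β r k θ s' (EuclideanSpace.single m 1)| ≤ R m / (1 - γ)) :
    |GIt T γ β r k θ s a (EuclideanSpace.single m 1)| ≤ R m / (1 - γ) := by
  rw [GIt_apply, innerSL_rv_single]
  have h1 : |γ * ∑ s', T s a s' * DIt T γ β r k θ s' (EuclideanSpace.single m 1)|
      ≤ γ * (R m / (1 - γ)) := by
    rw [abs_mul, abs_of_nonneg hγ0]
    refine mul_le_mul_of_nonneg_left ?_ hγ0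
    calc |∑ s', T s a s' * DIt T γ β r k θ s' (EuclideanSpace.single m 1)|
        ≤ ∑ s', |T s a s' * DIt T γ β r k θ s' (EuclideanSpace.single m 1)| :=
          Finset.abs_sum_le_sum_abs _ _
      _ ≤ ∑ s', T s a s' * (R m / (1 - γ)) := by
          refine Finset.sum_le_sum fun s' _ => ?_
          rw [abs_mul, abs_of_nonneg (hT0 s a s')]
          exact mul_le_mul_of_nonneg_left (hD s' m) (hT0 s a s')
      _ = R m / (1 - γ) := by rw [← Finset.sum_mul, hT1, one_mul]
  have h2 : R m + γ * (R m / (1 - γ)) = R m / (1 - γ) := by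
    have hne : (1:ℝ) - γ ≠ 0 := by linarith
    field_simp [hne]
    ring
  calc |r s a m + γ * ∑ s', T s a s' * DIt T γ β r k θ s' (EuclideanSpace.single m 1)|
      ≤ |r s a m| + |γ * ∑ s', T s a s' * DIt T γ β r k θ s' (EuclideanSpace.single m 1)| :=
        abs_add_le _ _
    _ ≤ R m + γ * (R m / (1 - γ)) := add_le_add (hr s a m) h1
    _ = R m / (1 - γ) := h2

lemma DIt_coord (T : Fin p → A → Fin p → ℝ) (γ β : ℝ) (r : Fin p → A → Fin n → ℝ)
    (R : Fin n → ℝ) (hT0 : ∀ s a s', 0 ≤ T s a s') (hT1 : ∀ s a, ∑ s', T s a s' = 1)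
    (hγ0 : 0 ≤ γ) (hγ1 : γ < 1) (hr : ∀ s a m, |r s a m| ≤ R m) (hR : ∀ m, 0 ≤ R m) :
    ∀ (k : ℕ) (θ : EuclideanSpace ℝ (Fin n)) (s : Fin p) (m : Fin n),
      |DIt T γ β r k θ s (EuclideanSpace.single m 1)| ≤ R m / (1 - γ) := by
  intro k
  induction k with
  | zero =>
    intro θ s m
    show |(0 : EuclideanSpace ℝ (Fin n) →L[ℝ] ℝ) _| ≤ _
    simp only [ContinuousLinearMap.zero_apply, abs_zero]
    exact div_nonneg (hR m) (by linarith)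
  | succ k ih =>
    intro θ s m
    rw [DIt_succ]
    set σ : A → ℝ := fun a =>
      Real.exp (gIt T γ β r k θ s a / β) / ∑ b : A, Real.exp (gIt T γ β r k θ s b / β) with hσ
    have happ : (∑ a : A, σ a • GIt T γ β r k θ s a) (EuclideanSpace.single m 1)
        = ∑ a : A, σ a * GIt T γ β r k θ s a (EuclideanSpace.single m 1) := by
      simp [ContinuousLinearMap.sum_apply]
    rw [happ]
    calc |∑ a : A, σ a * GIt T γ β r k θ s a (EuclideanSpace.single m 1)|
        ≤ ∑ a : A, |σ a * GIt T γ β r k θ s a (EuclideanSpace.single m 1)| :=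
          Finset.abs_sum_le_sum_abs _ _
      _ ≤ ∑ a : A, σ a * (R m / (1 - γ)) := by
          refine Finset.sum_le_sum fun a _ => ?_
          rw [abs_mul, abs_of_nonneg (softmax_nonneg T γ β r k θ s a)]
          exact mul_le_mul_of_nonneg_left
            (GIt_coord T γ β r R hT0 hT1 hγ0 hγ1 hr k θ s a m fun s' m => ih θ s' m)
            (softmax_nonneg T γ β r k θ s a)
      _ = R m / (1 - γ) := by
          rw [← Finset.sum_mul, softmax_sum_one, one_mul]

lemma DIt_norm (T : Fin p → A → Fin p → ℝ) (γ β : ℝ) (r : Fin p → A → Fin n → ℝ)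
    (R : Fin n → ℝ) (hT0 : ∀ s a s', 0 ≤ T s a s') (hT1 : ∀ s a, ∑ s', T s a s' = 1)
    (hγ0 : 0 ≤ γ) (hγ1 : γ < 1) (hr : ∀ s a m, |r s a m| ≤ R m) (hR : ∀ m, 0 ≤ R m)
    (k : ℕ) (θ : EuclideanSpace ℝ (Fin n)) (s : Fin p) :
    ‖DIt T γ β r k θ s‖ ≤ Real.sqrt (∑ m, (R m / (1 - γ)) ^ 2) :=
  opnorm_le_coord _ _ fun m => DIt_coord T γ β r R hT0 hT1 hγ0 hγ1 hr hR k θ s m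

lemma GIt_norm (T : Fin p → A → Fin p → ℝ) (γ β : ℝ) (r : Fin p → A → Fin n → ℝ)
    (R : Fin n → ℝ) (hT0 : ∀ s a s', 0 ≤ T s a s') (hT1 : ∀ s a, ∑ s', T s a s' = 1)
    (hγ0 : 0 ≤ γ) (hγ1 : γ < 1) (hr : ∀ s a m, |r s a m| ≤ R m) (hR : ∀ m, 0 ≤ R m)
    (k : ℕ) (θ : EuclideanSpace ℝ (Fin n)) (s : Fin p) (a : A) :
    ‖GIt T γ β r k θ s a‖ ≤ Real.sqrt (∑ m, (R m / (1 - γ)) ^ 2) :=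
  opnorm_le_coord _ _ fun m =>
    GIt_coord T γ β r R hT0 hT1 hγ0 hγ1 hr k θ s a m
      (fun s' m => DIt_coord T γ β r R hT0 hT1 hγ0 hγ1 hr hR k θ s' m)

lemma sqrtR_eq (γ : ℝ) (hγ1 : γ < 1) (R : Fin n → ℝ) :
    Real.sqrt (∑ m, R m ^ 2) = (1 - γ) * Real.sqrt (∑ m, (R m / (1 - γ)) ^ 2) := by
  have hne : (1:ℝ) - γ ≠ 0 := by linarith
  have h : (1 - γ) * Real.sqrt (∑ m, (R m / (1 - γ)) ^ 2)
      = Real.sqrt ((1 - γ) ^ 2 * ∑ m, (R m / (1 - γ)) ^ 2) := by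
    rw [Real.sqrt_mul (sq_nonneg _), Real.sqrt_sq (by linarith)]
  rw [h]
  congr 1
  rw [Finset.mul_sum]
  refine Finset.sum_congr rfl fun m _ => ?_
  field_simp

lemma innerSL_rv_norm (r : Fin p → A → Fin n → ℝ) (R : Fin n → ℝ)
    (hr : ∀ s a m, |r s a m| ≤ R m) (s : Fin p) (a : A) :
    ‖innerSL ℝ (rv r s a)‖ ≤ Real.sqrt (∑ m, R m ^ 2) :=
  opnorm_le_coord _ _ fun m => by rw [innerSL_rv_single]; exact hr s a m

lemma gIt_sub (T : Fin p → A → Fin p → ℝ) (γ β : ℝ) (r : Fin p → A → Fin n → ℝ)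
    (k : ℕ) (θ θ' : EuclideanSpace ℝ (Fin n)) (s : Fin p) (a : A) :
    gIt T γ β r k θ s a - gIt T γ β r k θ' s a
      = innerSL ℝ (rv r s a) (θ - θ')
        + γ * ∑ s', T s a s' * (vIt T γ β r k θ s' - vIt T γ β r k θ' s') := by
  rw [innerSL_rv_apply]
  unfold gIt
  have h1 : ∀ i, (θ - θ') i = θ i - θ' i := fun i => rfl
  simp only [h1, sub_mul, mul_sub, Finset.sum_sub_distrib]
  ring

lemma vIt_lip (T : Fin p → A → Fin p → ℝ) (γ β : ℝ) (r : Fin p → A → Fin n → ℝ)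
    (R : Fin n → ℝ) (hT0 : ∀ s a s', 0 ≤ T s a s') (hT1 : ∀ s a, ∑ s', T s a s' = 1)
    (hγ0 : 0 ≤ γ) (hγ1 : γ < 1) (hβ : 0 < β) (hr : ∀ s a m, |r s a m| ≤ R m) :
    ∀ (k : ℕ) (θ θ' : EuclideanSpace ℝ (Fin n)) (s : Fin p),
      |vIt T γ β r k θ s - vIt T γ β r k θ' s|
        ≤ Real.sqrt (∑ m, (R m / (1 - γ)) ^ 2) * ‖θ - θ'‖ := by
  intro k
  induction k with
  | zero =>
    intro θ θ' s
    show |(0:ℝ) - 0| ≤ _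
    simp only [sub_zero, abs_zero]
    exact mul_nonneg (Real.sqrt_nonneg _) (norm_nonneg _)
  | succ k ih =>
    intro θ θ' s
    rw [vIt_succ, vIt_succ]
    refine lse_abs_le hβ _ _ _ fun a => ?_
    rw [gIt_sub]
    set ρ := Real.sqrt (∑ m, (R m / (1 - γ)) ^ 2) with hρ
    have h1 : |innerSL ℝ (rv r s a) (θ - θ')| ≤ (1 - γ) * ρ * ‖θ - θ'‖ := by
      calc |innerSL ℝ (rv r s a) (θ - θ')| ≤ ‖innerSL ℝ (rv r s a)‖ * ‖θ - θ'‖ :=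
            (innerSL ℝ (rv r s a)).le_opNorm _
        _ ≤ Real.sqrt (∑ m, R m ^ 2) * ‖θ - θ'‖ :=
            mul_le_mul_of_nonneg_right (innerSL_rv_norm r R hr s a) (norm_nonneg _)
        _ = (1 - γ) * ρ * ‖θ - θ'‖ := by rw [sqrtR_eq γ hγ1 R]
    have h2 : |γ * ∑ s', T s a s' * (vIt T γ β r k θ s' - vIt T γ β r k θ' s')|
        ≤ γ * (ρ * ‖θ - θ'‖) := by
      rw [abs_mul, abs_of_nonneg hγ0]
      refine mul_le_mul_of_nonneg_left ?_ hγ0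
      calc |∑ s', T s a s' * (vIt T γ β r k θ s' - vIt T γ β r k θ' s')|
          ≤ ∑ s', |T s a s' * (vIt T γ β r k θ s' - vIt T γ β r k θ' s')| :=
            Finset.abs_sum_le_sum_abs _ _
        _ ≤ ∑ s', T s a s' * (ρ * ‖θ - θ'‖) := by
            refine Finset.sum_le_sum fun s' _ => ?_
            rw [abs_mul, abs_of_nonneg (hT0 s a s')]
            exact mul_le_mul_of_nonneg_left (ih θ θ' s') (hT0 s a s')
        _ = ρ * ‖θ - θ'‖ := by rw [← Finset.sum_mul, hT1, one_mul]
    calc |innerSL ℝ (rv r s a) (θ - θ')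
          + γ * ∑ s', T s a s' * (vIt T γ β r k θ s' - vIt T γ β r k θ' s')|
        ≤ |innerSL ℝ (rv r s a) (θ - θ')|
          + |γ * ∑ s', T s a s' * (vIt T γ β r k θ s' - vIt T γ β r k θ' s')| := abs_add_le _ _
      _ ≤ (1 - γ) * ρ * ‖θ - θ'‖ + γ * (ρ * ‖θ - θ'‖) := add_le_add h1 h2
      _ = ρ * ‖θ - θ'‖ := by ring

lemma gIt_lip (T : Fin p → A → Fin p → ℝ) (γ β : ℝ) (r : Fin p → A → Fin n → ℝ)
    (R : Fin n → ℝ) (hT0 : ∀ s a s', 0 ≤ T s a s') (hT1 : ∀ s a, ∑ s', T s a s' = 1)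
    (hγ0 : 0 ≤ γ) (hγ1 : γ < 1) (hβ : 0 < β) (hr : ∀ s a m, |r s a m| ≤ R m)
    (k : ℕ) (θ θ' : EuclideanSpace ℝ (Fin n)) (s : Fin p) (a : A) :
    |gIt T γ β r k θ s a - gIt T γ β r k θ' s a|
      ≤ Real.sqrt (∑ m, (R m / (1 - γ)) ^ 2) * ‖θ - θ'‖ := by
  rw [gIt_sub]
  set ρ := Real.sqrt (∑ m, (R m / (1 - γ)) ^ 2) with hρ
  have h1 : |innerSL ℝ (rv r s a) (θ - θ')| ≤ (1 - γ) * ρ * ‖θ - θ'‖ := by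
    calc |innerSL ℝ (rv r s a) (θ - θ')| ≤ ‖innerSL ℝ (rv r s a)‖ * ‖θ - θ'‖ :=
          (innerSL ℝ (rv r s a)).le_opNorm _
      _ ≤ Real.sqrt (∑ m, R m ^ 2) * ‖θ - θ'‖ :=
          mul_le_mul_of_nonneg_right (innerSL_rv_norm r R hr s a) (norm_nonneg _)
      _ = (1 - γ) * ρ * ‖θ - θ'‖ := by rw [sqrtR_eq γ hγ1 R]
  have h2 : |γ * ∑ s', T s a s' * (vIt T γ β r k θ s' - vIt T γ β r k θ' s')|
      ≤ γ * (ρ * ‖θ - θ'‖) := by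
    rw [abs_mul, abs_of_nonneg hγ0]
    refine mul_le_mul_of_nonneg_left ?_ hγ0
    calc |∑ s', T s a s' * (vIt T γ β r k θ s' - vIt T γ β r k θ' s')|
        ≤ ∑ s', |T s a s' * (vIt T γ β r k θ s' - vIt T γ β r k θ' s')| :=
          Finset.abs_sum_le_sum_abs _ _
      _ ≤ ∑ s', T s a s' * (ρ * ‖θ - θ'‖) := by
          refine Finset.sum_le_sum fun s' _ => ?_
          rw [abs_mul, abs_of_nonneg (hT0 s a s')]
          exact mul_le_mul_of_nonneg_left
            (vIt_lip T γ β r R hT0 hT1 hγ0 hγ1 hβ hr k θ θ' s') (hT0 s a s')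
      _ = ρ * ‖θ - θ'‖ := by rw [← Finset.sum_mul, hT1, one_mul]
  calc |innerSL ℝ (rv r s a) (θ - θ')
        + γ * ∑ s', T s a s' * (vIt T γ β r k θ s' - vIt T γ β r k θ' s')|
      ≤ |innerSL ℝ (rv r s a) (θ - θ')|
        + |γ * ∑ s', T s a s' * (vIt T γ β r k θ s' - vIt T γ β r k θ' s')| := abs_add_le _ _
    _ ≤ (1 - γ) * ρ * ‖θ - θ'‖ + γ * (ρ * ‖θ - θ'‖) := add_le_add h1 h2
    _ = ρ * ‖θ - θ'‖ := by ring

lemma GIt_sub (T : Fin p → A → Fin p → ℝ) (γ β : ℝ) (r : Fin p → A → Fin n → ℝ)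
    (k : ℕ) (θ θ' : EuclideanSpace ℝ (Fin n)) (s : Fin p) (a : A) :
    GIt T γ β r k θ s a - GIt T γ β r k θ' s a
      = γ • ∑ s', T s a s' • (DIt T γ β r k θ s' - DIt T γ β r k θ' s') := by
  unfold GIt
  simp only [smul_sub, Finset.sum_sub_distrib]
  abel

lemma GIt_sub_norm (T : Fin p → A → Fin p → ℝ) (γ β : ℝ) (r : Fin p → A → Fin n → ℝ)
    (hT0 : ∀ s a s', 0 ≤ T s a s') (hT1 : ∀ s a, ∑ s', T s a s' = 1) (hγ0 : 0 ≤ γ)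
    (k : ℕ) (θ θ' : EuclideanSpace ℝ (Fin n)) (s : Fin p) (a : A) (c : ℝ)
    (hD : ∀ s', ‖DIt T γ β r k θ s' - DIt T γ β r k θ' s'‖ ≤ c) :
    ‖GIt T γ β r k θ s a - GIt T γ β r k θ' s a‖ ≤ γ * c := by
  rw [GIt_sub]
  refine (norm_smul_le γ (∑ s', T s a s' • (DIt T γ β r k θ s' - DIt T γ β r k θ' s'))).trans ?_
  rw [Real.norm_eq_abs, abs_of_nonneg hγ0]
  refine mul_le_mul_of_nonneg_left ?_ hγ0
  calc ‖∑ s', T s a s' • (DIt T γ β r k θ s' - DIt T γ β r k θ' s')‖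
      ≤ ∑ s', ‖T s a s' • (DIt T γ β r k θ s' - DIt T γ β r k θ' s')‖ := norm_sum_le _ _
    _ ≤ ∑ s', T s a s' * c := by
        refine Finset.sum_le_sum fun s' _ => ?_
        refine (norm_smul_le (T s a s') (DIt T γ β r k θ s' - DIt T γ β r k θ' s')).trans ?_
        rw [Real.norm_eq_abs, abs_of_nonneg (hT0 s a s')]
        exact mul_le_mul_of_nonneg_left (hD s') (hT0 s a s')
    _ = c := by rw [← Finset.sum_mul, hT1, one_mul]

lemma DIt_lip (T : Fin p → A → Fin p → ℝ) (γ β : ℝ) (r : Fin p → A → Fin n → ℝ)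
    (R : Fin n → ℝ) (hT0 : ∀ s a s', 0 ≤ T s a s') (hT1 : ∀ s a, ∑ s', T s a s' = 1)
    (hγ0 : 0 ≤ γ) (hγ1 : γ < 1) (hβ : 0 < β) (hr : ∀ s a m, |r s a m| ≤ R m)
    (hR : ∀ m, 0 ≤ R m) :
    ∀ (k : ℕ) (θ θ' : EuclideanSpace ℝ (Fin n)) (s : Fin p),
      ‖DIt T γ β r k θ s - DIt T γ β r k θ' s‖
        ≤ (Real.sqrt (∑ m, (R m / (1 - γ)) ^ 2)) ^ 2 / (β * (1 - γ)) * ‖θ - θ'‖ := by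
  set ρ := Real.sqrt (∑ m, (R m / (1 - γ)) ^ 2) with hρdef
  set αc := ρ ^ 2 / (β * (1 - γ)) with hαc
  have hρ0 : 0 ≤ ρ := Real.sqrt_nonneg _
  have hne : (1:ℝ) - γ ≠ 0 := by linarith
  have hαc0 : 0 ≤ αc := by
    rw [hαc]
    exact div_nonneg (sq_nonneg _) (mul_pos hβ (by linarith)).le
  intro k
  induction k with
  | zero =>
    intro θ θ' s
    show ‖(0 : EuclideanSpace ℝ (Fin n) →L[ℝ] ℝ) - 0‖ ≤ _
    simp only [sub_zero, norm_zero]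
    exact mul_nonneg hαc0 (norm_nonneg _)
  | succ k ih =>
    intro θ θ' s
    rw [DIt_succ, DIt_succ]
    set G := fun (θ : EuclideanSpace ℝ (Fin n)) (a : A) => GIt T γ β r k θ s a with hG
    set σ := fun (θ : EuclideanSpace ℝ (Fin n)) (a : A) =>
      Real.exp (gIt T γ β r k θ s a / β) / ∑ b : A, Real.exp (gIt T γ β r k θ s b / β) with hσ
    have htri : ‖(∑ a : A, σ θ a • G θ a) - ∑ a : A, σ θ' a • G θ' a‖
        ≤ ‖(∑ a : A, σ θ a • G θ a) - ∑ a : A, σ θ a • G θ' a‖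
          + ‖(∑ a : A, σ θ a • G θ' a) - ∑ a : A, σ θ' a • G θ' a‖ :=
      norm_sub_le_norm_sub_add_norm_sub _ _ _
    have hfirst : ‖(∑ a : A, σ θ a • G θ a) - ∑ a : A, σ θ a • G θ' a‖
        ≤ γ * (αc * ‖θ - θ'‖) := by
      rw [← Finset.sum_sub_distrib]
      calc ‖∑ a : A, (σ θ a • G θ a - σ θ a • G θ' a)‖
          ≤ ∑ a : A, ‖σ θ a • G θ a - σ θ a • G θ' a‖ := norm_sum_le _ _
        _ ≤ ∑ a : A, σ θ a * (γ * (αc * ‖θ - θ'‖)) := by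
            refine Finset.sum_le_sum fun a _ => ?_
            rw [show σ θ a • G θ a - σ θ a • G θ' a = σ θ a • (G θ a - G θ' a) from
              (smul_sub _ _ _).symm]
            refine (norm_smul_le (σ θ a) (G θ a - G θ' a)).trans ?_
            rw [Real.norm_eq_abs, abs_of_nonneg (softmax_nonneg T γ β r k θ s a)]
            refine mul_le_mul_of_nonneg_left ?_ (softmax_nonneg T γ β r k θ s a)
            exact GIt_sub_norm T γ β r hT0 hT1 hγ0 k θ θ' s a _ fun s' => ih θ θ' s'
        _ = γ * (αc * ‖θ - θ'‖) := by
            rw [← Finset.sum_mul, softmax_sum_one, one_mul]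
    have hsecond : ‖(∑ a : A, σ θ a • G θ' a) - ∑ a : A, σ θ' a • G θ' a‖
        ≤ ρ * (ρ * ‖θ - θ'‖ / β) := by
      have := softmax_comb_lip (fun a => G θ' a) ρ hρ0
        (fun a => GIt_norm T γ β r R hT0 hT1 hγ0 hγ1 hr hR k θ' s a)
        (fun a => gIt T γ β r k θ s a / β) (fun a => gIt T γ β r k θ' s a / β)
        (ρ * ‖θ - θ'‖ / β) (fun a => ?_)
      · exact this
      · rw [div_sub_div_same, abs_div, abs_of_pos hβ]
        exact (div_le_div_iff_of_pos_right hβ).2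
          (gIt_lip T γ β r R hT0 hT1 hγ0 hγ1 hβ hr k θ θ' s a)
    calc ‖(∑ a : A, σ θ a • G θ a) - ∑ a : A, σ θ' a • G θ' a‖
        ≤ γ * (αc * ‖θ - θ'‖) + ρ * (ρ * ‖θ - θ'‖ / β) := by
          refine htri.trans (add_le_add hfirst hsecond)
      _ = αc * ‖θ - θ'‖ := by
          rw [hαc]
          field_simp
          ring

lemma gIt_sub2 (T : Fin p → A → Fin p → ℝ) (γ β : ℝ) (r : Fin p → A → Fin n → ℝ)
    (k1 k2 : ℕ) (θ : EuclideanSpace ℝ (Fin n)) (s : Fin p) (a : A) :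
    gIt T γ β r k1 θ s a - gIt T γ β r k2 θ s a
      = γ * ∑ s', T s a s' * (vIt T γ β r k1 θ s' - vIt T γ β r k2 θ s') := by
  unfold gIt
  simp only [mul_sub, Finset.sum_sub_distrib]
  ring

lemma GIt_sub2 (T : Fin p → A → Fin p → ℝ) (γ β : ℝ) (r : Fin p → A → Fin n → ℝ)
    (k1 k2 : ℕ) (θ : EuclideanSpace ℝ (Fin n)) (s : Fin p) (a : A) :
    GIt T γ β r k1 θ s a - GIt T γ β r k2 θ s a
      = γ • ∑ s', T s a s' • (DIt T γ β r k1 θ s' - DIt T γ β r k2 θ s') := by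
  unfold GIt
  simp only [smul_sub, Finset.sum_sub_distrib]
  abel

lemma GIt_sub2_norm (T : Fin p → A → Fin p → ℝ) (γ β : ℝ) (r : Fin p → A → Fin n → ℝ)
    (hT0 : ∀ s a s', 0 ≤ T s a s') (hT1 : ∀ s a, ∑ s', T s a s' = 1) (hγ0 : 0 ≤ γ)
    (k1 k2 : ℕ) (θ : EuclideanSpace ℝ (Fin n)) (s : Fin p) (a : A) (c : ℝ)
    (hD : ∀ s', ‖DIt T γ β r k1 θ s' - DIt T γ β r k2 θ s'‖ ≤ c) :
    ‖GIt T γ β r k1 θ s a - GIt T γ β r k2 θ s a‖ ≤ γ * c := by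
  rw [GIt_sub2]
  refine (norm_smul_le γ (∑ s', T s a s' • (DIt T γ β r k1 θ s' - DIt T γ β r k2 θ s'))).trans ?_
  rw [Real.norm_eq_abs, abs_of_nonneg hγ0]
  refine mul_le_mul_of_nonneg_left ?_ hγ0
  calc ‖∑ s', T s a s' • (DIt T γ β r k1 θ s' - DIt T γ β r k2 θ s')‖
      ≤ ∑ s', ‖T s a s' • (DIt T γ β r k1 θ s' - DIt T γ β r k2 θ s')‖ := norm_sum_le _ _
    _ ≤ ∑ s', T s a s' * c := by
        refine Finset.sum_le_sum fun s' _ => ?_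
        refine (norm_smul_le (T s a s') (DIt T γ β r k1 θ s' - DIt T γ β r k2 θ s')).trans ?_
        rw [Real.norm_eq_abs, abs_of_nonneg (hT0 s a s')]
        exact mul_le_mul_of_nonneg_left (hD s') (hT0 s a s')
    _ = c := by rw [← Finset.sum_mul, hT1, one_mul]

lemma vIt_toV (T : Fin p → A → Fin p → ℝ) (γ β : ℝ) (r : Fin p → A → Fin n → ℝ)
    (hT0 : ∀ s a s', 0 ≤ T s a s') (hT1 : ∀ s a, ∑ s', T s a s' = 1)
    (hγ0 : 0 ≤ γ) (hβ : 0 < β)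
    (V : EuclideanSpace ℝ (Fin n) → Fin p → ℝ)
    (hV : ∀ θ s, V θ s = β * Real.log (∑ a : A, Real.exp
      ((∑ i, θ i * r s a i + γ * ∑ s', T s a s' * V θ s') / β))) :
    ∀ (k : ℕ) (θ : EuclideanSpace ℝ (Fin n)) (s : Fin p),
      |vIt T γ β r k θ s - V θ s| ≤ γ ^ k * ∑ s', |V θ s'| := by
  intro k
  induction k with
  | zero =>
    intro θ s
    show |0 - V θ s| ≤ _
    rw [zero_sub, abs_neg, pow_zero, one_mul]
    exact Finset.single_le_sum (f := fun s' => |V θ s'|) (fun s' _ => abs_nonneg _)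
      (Finset.mem_univ s)
  | succ k ih =>
    intro θ s
    rw [vIt_succ, hV θ s]
    refine lse_abs_le hβ _ _ _ fun a => ?_
    have hkey : gIt T γ β r k θ s a
        - (∑ i, θ i * r s a i + γ * ∑ s', T s a s' * V θ s')
        = γ * ∑ s', T s a s' * (vIt T γ β r k θ s' - V θ s') := by
      unfold gIt
      simp only [mul_sub, Finset.sum_sub_distrib]
      ring
    rw [hkey, abs_mul, abs_of_nonneg hγ0]
    have h2 : |∑ s', T s a s' * (vIt T γ β r k θ s' - V θ s')|
        ≤ γ ^ k * ∑ s', |V θ s'| := by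
      calc |∑ s', T s a s' * (vIt T γ β r k θ s' - V θ s')|
          ≤ ∑ s', |T s a s' * (vIt T γ β r k θ s' - V θ s')| := Finset.abs_sum_le_sum_abs _ _
        _ ≤ ∑ s', T s a s' * (γ ^ k * ∑ s'', |V θ s''|) := by
            refine Finset.sum_le_sum fun s' _ => ?_
            rw [abs_mul, abs_of_nonneg (hT0 s a s')]
            exact mul_le_mul_of_nonneg_left (ih θ s') (hT0 s a s')
        _ = γ ^ k * ∑ s'', |V θ s''| := by rw [← Finset.sum_mul, hT1, one_mul]
    calc γ * |∑ s', T s a s' * (vIt T γ β r k θ s' - V θ s')|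
        ≤ γ * (γ ^ k * ∑ s', |V θ s'|) := mul_le_mul_of_nonneg_left h2 hγ0
      _ = γ ^ (k + 1) * ∑ s', |V θ s'| := by ring

lemma DIt_consec (T : Fin p → A → Fin p → ℝ) (γ β : ℝ) (r : Fin p → A → Fin n → ℝ)
    (R : Fin n → ℝ) (hT0 : ∀ s a s', 0 ≤ T s a s') (hT1 : ∀ s a, ∑ s', T s a s' = 1)
    (hγ0 : 0 ≤ γ) (hγ1 : γ < 1) (hβ : 0 < β) (hr : ∀ s a m, |r s a m| ≤ R m)
    (hR : ∀ m, 0 ≤ R m) (θ : EuclideanSpace ℝ (Fin n)) (U : ℝ) (hU : 0 ≤ U)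
    (hu : ∀ (k : ℕ) (s : Fin p), |vIt T γ β r (k+1) θ s - vIt T γ β r k θ s| ≤ 2 * γ ^ k * U) :
    ∀ (k : ℕ) (s : Fin p),
      ‖DIt T γ β r (k+1) θ s - DIt T γ β r k θ s‖
        ≤ Real.sqrt (∑ m, (R m / (1 - γ)) ^ 2) * γ ^ k
          + 2 * Real.sqrt (∑ m, (R m / (1 - γ)) ^ 2) * U / β * (k * γ ^ k) := by
  set ρ := Real.sqrt (∑ m, (R m / (1 - γ)) ^ 2) with hρdef
  have hρ0 : 0 ≤ ρ := Real.sqrt_nonneg _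
  intro k
  induction k with
  | zero =>
    intro s
    show ‖DIt T γ β r 1 θ s - 0‖ ≤ _
    rw [sub_zero]
    simp only [pow_zero, mul_one, Nat.cast_zero, zero_mul, mul_zero, add_zero]
    exact DIt_norm T γ β r R hT0 hT1 hγ0 hγ1 hr hR 1 θ s
  | succ k ih =>
    intro s
    have hsucc1 : DIt T γ β r (k+2) θ s = ∑ a : A,
        (Real.exp (gIt T γ β r (k+1) θ s a / β) / ∑ b : A, Real.exp (gIt T γ β r (k+1) θ s b / β)) •
        GIt T γ β r (k+1) θ s a := DIt_succ T γ β r (k+1) θ s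
    have hsucc2 : DIt T γ β r (k+1) θ s = ∑ a : A,
        (Real.exp (gIt T γ β r k θ s a / β) / ∑ b : A, Real.exp (gIt T γ β r k θ s b / β)) •
        GIt T γ β r k θ s a := DIt_succ T γ β r k θ s
    rw [hsucc1, hsucc2]
    set σ1 := fun (a : A) =>
      Real.exp (gIt T γ β r (k+1) θ s a / β) / ∑ b : A, Real.exp (gIt T γ β r (k+1) θ s b / β)
      with hσ1
    set σ2 := fun (a : A) =>
      Real.exp (gIt T γ β r k θ s a / β) / ∑ b : A, Real.exp (gIt T γ β r k θ s b / β) with hσ2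
    set G1 := fun (a : A) => GIt T γ β r (k+1) θ s a with hG1
    set G2 := fun (a : A) => GIt T γ β r k θ s a with hG2
    have htri : ‖(∑ a : A, σ1 a • G1 a) - ∑ a : A, σ2 a • G2 a‖
        ≤ ‖(∑ a : A, σ1 a • G1 a) - ∑ a : A, σ1 a • G2 a‖
          + ‖(∑ a : A, σ1 a • G2 a) - ∑ a : A, σ2 a • G2 a‖ :=
      norm_sub_le_norm_sub_add_norm_sub _ _ _
    have hbk : (0:ℝ) ≤ ρ * γ ^ k + 2 * ρ * U / β * (k * γ ^ k) := by
      have h1 : (0:ℝ) ≤ γ ^ k := pow_nonneg hγ0 k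
      have h2 : (0:ℝ) ≤ (k : ℝ) := Nat.cast_nonneg k
      positivity
    have hfirst : ‖(∑ a : A, σ1 a • G1 a) - ∑ a : A, σ1 a • G2 a‖
        ≤ γ * (ρ * γ ^ k + 2 * ρ * U / β * (k * γ ^ k)) := by
      rw [← Finset.sum_sub_distrib]
      calc ‖∑ a : A, (σ1 a • G1 a - σ1 a • G2 a)‖
          ≤ ∑ a : A, ‖σ1 a • G1 a - σ1 a • G2 a‖ := norm_sum_le _ _
        _ ≤ ∑ a : A, σ1 a * (γ * (ρ * γ ^ k + 2 * ρ * U / β * (k * γ ^ k))) := by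
            refine Finset.sum_le_sum fun a _ => ?_
            rw [show σ1 a • G1 a - σ1 a • G2 a = σ1 a • (G1 a - G2 a) from
              (smul_sub _ _ _).symm]
            refine (norm_smul_le (σ1 a) (G1 a - G2 a)).trans ?_
            rw [Real.norm_eq_abs, abs_of_nonneg (softmax_nonneg T γ β r (k+1) θ s a)]
            refine mul_le_mul_of_nonneg_left ?_ (softmax_nonneg T γ β r (k+1) θ s a)
            exact GIt_sub2_norm T γ β r hT0 hT1 hγ0 (k+1) k θ s a _ fun s' => ih s'
        _ = γ * (ρ * γ ^ k + 2 * ρ * U / β * (k * γ ^ k)) := by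
            rw [← Finset.sum_mul, softmax_sum_one, one_mul]
    have hsecond : ‖(∑ a : A, σ1 a • G2 a) - ∑ a : A, σ2 a • G2 a‖
        ≤ ρ * (γ * (2 * γ ^ k * U) / β) := by
      refine softmax_comb_lip (fun a => G2 a) ρ hρ0
        (fun a => GIt_norm T γ β r R hT0 hT1 hγ0 hγ1 hr hR k θ s a)
        (fun a => gIt T γ β r (k+1) θ s a / β) (fun a => gIt T γ β r k θ s a / β)
        (γ * (2 * γ ^ k * U) / β) (fun a => ?_)
      rw [div_sub_div_same, abs_div, abs_of_pos hβ]
      refine (div_le_div_iff_of_pos_right hβ).2 ?_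
      rw [gIt_sub2, abs_mul, abs_of_nonneg hγ0]
      refine mul_le_mul_of_nonneg_left ?_ hγ0
      calc |∑ s', T s a s' * (vIt T γ β r (k+1) θ s' - vIt T γ β r k θ s')|
          ≤ ∑ s', |T s a s' * (vIt T γ β r (k+1) θ s' - vIt T γ β r k θ s')| :=
            Finset.abs_sum_le_sum_abs _ _
        _ ≤ ∑ s', T s a s' * (2 * γ ^ k * U) := by
            refine Finset.sum_le_sum fun s' _ => ?_
            rw [abs_mul, abs_of_nonneg (hT0 s a s')]
            exact mul_le_mul_of_nonneg_left (hu k s') (hT0 s a s')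
        _ = 2 * γ ^ k * U := by rw [← Finset.sum_mul, hT1, one_mul]
    calc ‖(∑ a : A, σ1 a • G1 a) - ∑ a : A, σ2 a • G2 a‖
        ≤ γ * (ρ * γ ^ k + 2 * ρ * U / β * (k * γ ^ k)) + ρ * (γ * (2 * γ ^ k * U) / β) :=
          htri.trans (add_le_add hfirst hsecond)
      _ = ρ * γ ^ (k+1) + 2 * ρ * U / β * ((k+1) * γ ^ (k+1)) := by
          field_simp
          ring
      _ = ρ * γ ^ (k+1) + 2 * ρ * U / β * ((((k:ℕ)+1 : ℕ) : ℝ) * γ ^ (k+1)) := by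
          push_cast
          ring

end mdp

/-- Smoothness of the dual objective (Theorem 3.4).  With `V θ` the fixed point of the
soft Bellman operator `T_θ`, component-wise reward bounds `|r_m(s,a)| ≤ R_m`, an initial
distribution `μ0`, and an offset vector `b`, the dual objective
`L(θ) = Σ_s μ0(s) V(θ)(s) − ⟨b, θ⟩` is differentiable and its gradient is `α`-Lipschitz
in the Euclidean norm with `α = (1/(β(1−γ))) Σ_m (R_m/(1−γ))²`. -/
theorem stmt_6 {p n : ℕ} {A : Type*} [Fintype A] [Nonempty A]
    (T : Fin p → A → Fin p → ℝ)
    (hT0 : ∀ s a s', 0 ≤ T s a s') (hT1 : ∀ s a, ∑ s', T s a s' = 1)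
    (γ : ℝ) (hγ0 : 0 ≤ γ) (hγ1 : γ < 1)
    (β : ℝ) (hβ : 0 < β)
    (r : Fin p → A → Fin n → ℝ)
    (R : Fin n → ℝ) (hr : ∀ s a m, |r s a m| ≤ R m)
    (μ0 : Fin p → ℝ) (hμ0 : ∀ s, 0 ≤ μ0 s) (hμ1 : ∑ s, μ0 s = 1)
    (b : EuclideanSpace ℝ (Fin n))
    (V : EuclideanSpace ℝ (Fin n) → Fin p → ℝ)
    (hV : ∀ θ s, V θ s = β * Real.log (∑ a : A, Real.exp
      ((∑ i, θ i * r s a i + γ * ∑ s', T s a s' * V θ s') / β))) :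
    Differentiable ℝ (fun θ : EuclideanSpace ℝ (Fin n) =>
        ∑ s, μ0 s * V θ s - ∑ i, b i * θ i) ∧
      ∀ θ θ' : EuclideanSpace ℝ (Fin n),
        ‖gradient (fun θ'' : EuclideanSpace ℝ (Fin n) =>
            ∑ s, μ0 s * V θ'' s - ∑ i, b i * θ'' i) θ
          - gradient (fun θ'' : EuclideanSpace ℝ (Fin n) =>
            ∑ s, μ0 s * V θ'' s - ∑ i, b i * θ'' i) θ'‖
          ≤ (1 / (β * (1 - γ)) * ∑ m, (R m / (1 - γ)) ^ 2) * ‖θ - θ'‖ := by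
  classical
  rcases Nat.eq_zero_or_pos p with hp | hp
  · subst hp
    simp at hμ1
  haveI : Nonempty (Fin p) := ⟨⟨0, hp⟩⟩
  have hR : ∀ m, 0 ≤ R m :=
    fun m => (abs_nonneg _).trans (hr (Classical.arbitrary _) (Classical.arbitrary _) m)
  set ρ := Real.sqrt (∑ m, (R m / (1 - γ)) ^ 2) with hρdef
  set αc := ρ ^ 2 / (β * (1 - γ)) with hαcdef
  have h1γ : (0:ℝ) < 1 - γ := by linarith
  have hαc0 : 0 ≤ αc := div_nonneg (sq_nonneg _) (mul_pos hβ h1γ).le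
  have hUnn : ∀ θ : EuclideanSpace ℝ (Fin n), 0 ≤ ∑ s', |V θ s'| :=
    fun θ => Finset.sum_nonneg fun s' _ => abs_nonneg _
  have hu : ∀ (θ : EuclideanSpace ℝ (Fin n)) (k : ℕ) (s),
      |vIt T γ β r (k+1) θ s - vIt T γ β r k θ s| ≤ 2 * γ ^ k * ∑ s', |V θ s'| := by
    intro θ k s
    have h1 := vIt_toV T γ β r hT0 hT1 hγ0 hβ V hV (k+1) θ s
    have h2 := vIt_toV T γ β r hT0 hT1 hγ0 hβ V hV k θ s
    have h3 : γ ^ (k+1) ≤ γ ^ k := by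
      rw [pow_succ]
      nlinarith [pow_nonneg hγ0 k]
    have h4 := abs_sub_le (vIt T γ β r (k+1) θ s) (V θ s) (vIt T γ β r k θ s)
    rw [abs_sub_comm (V θ s)] at h4
    nlinarith [hUnn θ, pow_nonneg hγ0 k]
  have hconv : ∀ (θ : EuclideanSpace ℝ (Fin n)) (s : Fin p),
      ∃ Dl, Filter.Tendsto (fun k => DIt T γ β r k θ s) Filter.atTop (nhds Dl) := by
    intro θ s
    apply cauchySeq_tendsto_of_complete
    apply cauchySeq_of_summable_dist
    have hsum1 : Summable (fun k : ℕ => γ ^ k) := summable_geometric_of_lt_one hγ0 hγ1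
    have hsum2 : Summable (fun k : ℕ => (k : ℝ) * γ ^ k) := by
      have h := summable_pow_mul_geometric_of_norm_lt_one (R := ℝ) 1
        (by rwa [Real.norm_eq_abs, abs_of_nonneg hγ0])
      simpa using h
    have hb : Summable (fun k : ℕ => ρ * γ ^ k
        + 2 * ρ * (∑ s', |V θ s'|) / β * ((k:ℝ) * γ ^ k)) :=
      (hsum1.mul_left ρ).add (hsum2.mul_left _)
    refine Summable.of_nonneg_of_le (fun k => dist_nonneg) (fun k => ?_) hb
    rw [dist_eq_norm, norm_sub_rev]
    exact DIt_consec T γ β r R hT0 hT1 hγ0 hγ1 hβ hr hR θ _ (hUnn θ) (fun k s => hu θ k s) k s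
  choose DV hDV using hconv
  have hvlim : ∀ (θ : EuclideanSpace ℝ (Fin n)) (s : Fin p),
      Filter.Tendsto (fun k => vIt T γ β r k θ s) Filter.atTop (nhds (V θ s)) := by
    intro θ s
    rw [tendsto_iff_dist_tendsto_zero]
    have hz : Filter.Tendsto (fun k : ℕ => γ ^ k * ∑ s', |V θ s'|) Filter.atTop (nhds 0) := by
      simpa using (tendsto_pow_atTop_nhds_zero_of_lt_one hγ0 hγ1).mul_const (∑ s', |V θ s'|)
    refine squeeze_zero (fun k => dist_nonneg) (fun k => ?_) hz
    rw [Real.dist_eq]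
    exact vIt_toV T γ β r hT0 hT1 hγ0 hβ V hV k θ s
  have hVder : ∀ (θ0 : EuclideanSpace ℝ (Fin n)) (s : Fin p),
      HasFDerivAt (fun θ => V θ s) (DV θ0 s) θ0 := by
    intro θ0 s
    have hquad : ∀ θ, |V θ s - V θ0 s - DV θ0 s (θ - θ0)| ≤ αc * ‖θ - θ0‖ ^ 2 := by
      intro θ
      have happ : Filter.Tendsto (fun k => DIt T γ β r k θ0 s (θ - θ0)) Filter.atTop
          (nhds (DV θ0 s (θ - θ0))) :=
        ((ContinuousLinearMap.apply ℝ ℝ (θ - θ0)).continuous.tendsto _).comp (hDV θ0 s)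
      have hterm : Filter.Tendsto
          (fun k => |vIt T γ β r k θ s - vIt T γ β r k θ0 s - DIt T γ β r k θ0 s (θ - θ0)|)
          Filter.atTop (nhds |V θ s - V θ0 s - DV θ0 s (θ - θ0)|) :=
        (((hvlim θ s).sub (hvlim θ0 s)).sub happ).abs
      refine le_of_tendsto hterm (Filter.Eventually.of_forall fun k => ?_)
      have hq := quad_bound (fun θ => vIt T γ β r k θ s) (fun θ' => DIt T γ β r k θ' s)
        αc hαc0 (fun θ' => vIt_hasFDerivAt T γ β hβ r k θ' s)
        (fun θ1 θ2 => DIt_lip T γ β r R hT0 hT1 hγ0 hγ1 hβ hr hR k θ1 θ2 s) θ0 θ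
      simpa [Real.norm_eq_abs] using hq
    rw [hasFDerivAt_iff_isLittleO_nhds_zero, Asymptotics.isLittleO_iff]
    intro c hc
    have hball : Metric.ball (0 : EuclideanSpace ℝ (Fin n)) (c / (αc + 1)) ∈ nhds 0 :=
      Metric.ball_mem_nhds _ (by positivity)
    filter_upwards [hball] with h hh
    rw [Metric.mem_ball, dist_zero_right] at hh
    have h1 := hquad (θ0 + h)
    rw [add_sub_cancel_left] at h1
    have h2 : αc * ‖h‖ ≤ c := by
      have h3 : αc * ‖h‖ ≤ αc * (c / (αc + 1)) := mul_le_mul_of_nonneg_left hh.le hαc0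
      have h4 : αc * (c / (αc + 1)) ≤ c := by
        rw [mul_div_assoc']
        rw [div_le_iff₀ (by positivity)]
        nlinarith [hc.le]
      linarith
    have h5 : |V (θ0 + h) s - V θ0 s - DV θ0 s h| ≤ c * ‖h‖ := by
      calc |V (θ0 + h) s - V θ0 s - DV θ0 s h| ≤ αc * ‖h‖ ^ 2 := h1
        _ = (αc * ‖h‖) * ‖h‖ := by ring
        _ ≤ c * ‖h‖ := mul_le_mul_of_nonneg_right h2 (norm_nonneg h)
    simpa [Real.norm_eq_abs] using h5
  have hDVlip : ∀ (θ θ' : EuclideanSpace ℝ (Fin n)) (s : Fin p),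
      ‖DV θ s - DV θ' s‖ ≤ αc * ‖θ - θ'‖ := by
    intro θ θ' s
    have hlim : Filter.Tendsto (fun k => ‖DIt T γ β r k θ s - DIt T γ β r k θ' s‖)
        Filter.atTop (nhds ‖DV θ s - DV θ' s‖) := ((hDV θ s).sub (hDV θ' s)).norm
    exact le_of_tendsto hlim (Filter.Eventually.of_forall fun k =>
      DIt_lip T γ β r R hT0 hT1 hγ0 hγ1 hβ hr hR k θ θ' s)
  have hbl : ∀ θ0 : EuclideanSpace ℝ (Fin n),
      HasFDerivAt (fun θ : EuclideanSpace ℝ (Fin n) => ∑ i, b i * θ i) (innerSL ℝ b) θ0 := by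
    intro θ0
    have h := hasFDerivAt_sum_mul b θ0
    have heq : (fun θ : EuclideanSpace ℝ (Fin n) => ∑ i, θ i * b i)
        = fun θ : EuclideanSpace ℝ (Fin n) => ∑ i, b i * θ i := by
      funext u
      exact Finset.sum_congr rfl fun i _ => mul_comm _ _
    rwa [heq] at h
  have hLder : ∀ θ0 : EuclideanSpace ℝ (Fin n), HasFDerivAt
      (fun θ : EuclideanSpace ℝ (Fin n) => ∑ s, μ0 s * V θ s - ∑ i, b i * θ i)
      ((∑ s, μ0 s • DV θ0 s) - innerSL ℝ b) θ0 := fun θ0 =>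
    (HasFDerivAt.fun_sum fun s _ => (hVder θ0 s).const_mul (μ0 s)).sub (hbl θ0)
  refine ⟨fun θ0 => (hLder θ0).differentiableAt, ?_⟩
  intro θ θ'
  have hg : ∀ θ0 : EuclideanSpace ℝ (Fin n),
      gradient (fun θ'' : EuclideanSpace ℝ (Fin n) =>
        ∑ s, μ0 s * V θ'' s - ∑ i, b i * θ'' i) θ0
      = (InnerProductSpace.toDual ℝ (EuclideanSpace ℝ (Fin n))).symm
          ((∑ s, μ0 s • DV θ0 s) - innerSL ℝ b) :=
    fun θ0 => ((hLder θ0).hasGradientAt).gradient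
  rw [hg θ, hg θ', ← LinearIsometryEquiv.map_sub, LinearIsometryEquiv.norm_map]
  have hdiff : ((∑ s, μ0 s • DV θ s) - innerSL ℝ b) - ((∑ s, μ0 s • DV θ' s) - innerSL ℝ b)
      = ∑ s, μ0 s • (DV θ s - DV θ' s) := by
    simp only [smul_sub, Finset.sum_sub_distrib]
    abel
  rw [hdiff]
  have hnorm : ‖∑ s, μ0 s • (DV θ s - DV θ' s)‖ ≤ αc * ‖θ - θ'‖ := by
    calc ‖∑ s, μ0 s • (DV θ s - DV θ' s)‖ ≤ ∑ s, ‖μ0 s • (DV θ s - DV θ' s)‖ :=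
          norm_sum_le _ _
      _ ≤ ∑ s, μ0 s * (αc * ‖θ - θ'‖) := by
          refine Finset.sum_le_sum fun s _ => ?_
          refine (norm_smul_le (μ0 s) (DV θ s - DV θ' s)).trans ?_
          rw [Real.norm_eq_abs, abs_of_nonneg (hμ0 s)]
          exact mul_le_mul_of_nonneg_left (hDVlip θ θ' s) (hμ0 s)
      _ = αc * ‖θ - θ'‖ := by rw [← Finset.sum_mul, hμ1, one_mul]
  have hconst : αc = 1 / (β * (1 - γ)) * ∑ m, (R m / (1 - γ)) ^ 2 := by
    rw [hαcdef, hρdef, Real.sq_sqrt (Finset.sum_nonneg fun m _ => sq_nonneg _)]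
    ring
  rw [← hconst]
  exact hnorm
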